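/- Extreme rays of spectrahedral cones via kernel maximality: let L be a linear subspace of the space of real symmetric n×n matrices and let C = {X in L : X is positive semidefinite}, a spectrahedral cone. A nonzero M in C spans an extreme ray of C if and only if the kernel of M is maximal over L in the following sense: for every A in L with ker(M) ⊆ ker(A) (kernels taken as kernels of the associated linear maps x ↦ Mx and x ↦ Ax on ℝ^n), A is a real scalar multiple of M. -/

import Mathlib

open Matrix

-- homogeneity of quadratic form
lemma quad_smul {n : ℕ} (B : Matrix (Fin n) (Fin n) ℝ) (c : ℝ) (x : Fin n → ℝ) :
    (c • x) ⬝ᵥ B *ᵥ (c • x) = c ^ 2 * (x ⬝ᵥ B *ᵥ x) := by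
  rw [mulVec_smul, dotProduct_smul, smul_dotProduct]
  ring_nf

-- symmetric: cross term
lemma dot_mulVec_symm {n : ℕ} {B : Matrix (Fin n) (Fin n) ℝ} (hB : B.IsSymm)
    (u v : Fin n → ℝ) : u ⬝ᵥ B *ᵥ v = (B *ᵥ u) ⬝ᵥ v := by
  rw [dotProduct_mulVec, ← mulVec_transpose, hB.eq]

-- key lemma
lemma key_eps {n : ℕ} {M A : Matrix (Fin n) (Fin n) ℝ} (hM : M.PosSemidef) (hM0 : M ≠ 0)
    (hA : A.IsSymm) (hker : LinearMap.ker M.mulVecLin ≤ LinearMap.ker A.mulVecLin) :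
    ∃ ε : ℝ, 0 < ε ∧ ∀ x : Fin n → ℝ, ε * |x ⬝ᵥ A *ᵥ x| ≤ x ⬝ᵥ M *ᵥ x := by
  classical
  have hMsymm : M.IsSymm := by
    have h := hM.isHermitian
    rwa [Matrix.IsHermitian, conjTranspose_eq_transpose_of_trivial] at h
  set K := LinearMap.ker M.mulVecLin with hK
  set R := LinearMap.range M.mulVecLin with hR
  -- disjointness
  have hdisj : ∀ x, x ∈ K → x ∈ R → x = 0 := by
    intro x hxK hxR
    obtain ⟨y, hy⟩ := hxR
    have hMx : M *ᵥ x = 0 := hxK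
    have : x ⬝ᵥ x = 0 := by
      calc x ⬝ᵥ x = (M *ᵥ y) ⬝ᵥ x := by rw [← hy]; rfl
        _ = y ⬝ᵥ M *ᵥ x := (dot_mulVec_symm hMsymm y x).symm
        _ = 0 := by rw [hMx, dotProduct_zero]
    exact (dotProduct_self_eq_zero).mp this
  have hdisj' : Disjoint K R := by
    rw [Submodule.disjoint_def]
    intro x hx hx'; exact hdisj x hx hx'
  -- sup = top
  have hsup : K ⊔ R = ⊤ := by
    apply Submodule.eq_top_of_finrank_eq
    have h1 := Submodule.finrank_sup_add_finrank_inf_eq K R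
    have h2 : K ⊓ R = ⊥ := by rw [eq_bot_iff]; intro x hx; exact (Submodule.mem_bot ℝ).mpr (hdisj x hx.1 hx.2)
    rw [h2, finrank_bot, add_zero] at h1
    have h3 := LinearMap.finrank_range_add_finrank_ker M.mulVecLin
    rw [← hK, ← hR] at h3
    simp only [Module.finrank_pi, Fintype.card_fin] at h3 ⊢
    omega
  -- quadratic forms are continuous
  have contM : Continuous fun x : Fin n → ℝ => x ⬝ᵥ M *ᵥ x :=
    Continuous.dotProduct continuous_id (Continuous.matrix_mulVec continuous_const continuous_id)
  have contA : Continuous fun x : Fin n → ℝ => |x ⬝ᵥ A *ᵥ x| :=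
    (Continuous.dotProduct continuous_id (Continuous.matrix_mulVec continuous_const continuous_id)).abs
  -- a unit vector in R
  have hMne : ∃ y, M *ᵥ y ≠ 0 := by
    by_contra h
    push_neg at h
    apply hM0
    ext i j
    simpa using congrFun (h (Pi.single j 1)) i
  obtain ⟨y, hy⟩ := hMne
  set v₀ : Fin n → ℝ := ‖M *ᵥ y‖⁻¹ • (M *ᵥ y) with hv₀
  have hv₀R : v₀ ∈ R := Submodule.smul_mem _ _ ⟨y, rfl⟩
  have hv₀n : ‖v₀‖ = 1 := by
    rw [hv₀, norm_smul, norm_inv, norm_norm, inv_mul_cancel₀ (norm_ne_zero_iff.mpr hy)]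
  -- compact sets
  have hScompact : IsCompact ((Metric.sphere (0 : Fin n → ℝ) 1) ∩ (R : Set (Fin n → ℝ))) :=
    (isCompact_sphere 0 1).inter_right R.closed_of_finiteDimensional
  have hSne : ((Metric.sphere (0 : Fin n → ℝ) 1) ∩ (R : Set (Fin n → ℝ))).Nonempty :=
    ⟨v₀, by simpa [mem_sphere_iff_norm] using hv₀n, hv₀R⟩
  obtain ⟨z, hz, hzmin⟩ := hScompact.exists_isMinOn hSne (contM.continuousOn)
  set c := z ⬝ᵥ M *ᵥ z with hc
  have hc0 : 0 < c := by
    rcases (hM.dotProduct_mulVec_nonneg z).lt_or_eq with h | h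
    · simpa using h
    · exfalso
      have hz0 : M *ᵥ z = 0 := (hM.dotProduct_mulVec_zero_iff z).mp (by simpa using h.symm)
      have hze : z = 0 := hdisj z hz0 hz.2
      have hz1 : ‖z‖ = 1 := by simpa [mem_sphere_iff_norm] using hz.1
      rw [hze, norm_zero] at hz1
      norm_num at hz1
  -- max of |A| quadratic on sphere
  obtain ⟨w, hw, hwmax⟩ := (isCompact_sphere (0 : Fin n → ℝ) 1).exists_isMaxOn
    ⟨v₀, by simpa [mem_sphere_iff_norm] using hv₀n⟩ contA.continuousOn
  set C := |w ⬝ᵥ A *ᵥ w| with hCdef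
  have hC0 : 0 ≤ C := abs_nonneg _
  refine ⟨c / (C + 1), div_pos hc0 (by linarith), ?_⟩
  intro x
  -- decompose x = u + v
  obtain ⟨u, huK, v, hvR, rfl⟩ := Submodule.mem_sup.mp (hsup ▸ Submodule.mem_top (x := x))
  have hMu : M *ᵥ u = 0 := huK
  have hAu : A *ᵥ u = 0 := hker huK
  have hquadM : (u + v) ⬝ᵥ M *ᵥ (u + v) = v ⬝ᵥ M *ᵥ v := by
    rw [mulVec_add, hMu, zero_add, add_dotProduct, dot_mulVec_symm hMsymm u v,
      hMu, zero_dotProduct, zero_add]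
  have hquadA : (u + v) ⬝ᵥ A *ᵥ (u + v) = v ⬝ᵥ A *ᵥ v := by
    rw [mulVec_add, hAu, zero_add, add_dotProduct, dot_mulVec_symm hA u v,
      hAu, zero_dotProduct, zero_add]
  rw [hquadM, hquadA]
  rcases eq_or_ne v 0 with rfl | hv0
  · simp
  -- scale v to unit sphere
  have hvn : ‖v‖ ≠ 0 := norm_ne_zero_iff.mpr hv0
  set v' := ‖v‖⁻¹ • v with hv'
  have hv'S : v' ∈ Metric.sphere (0 : Fin n → ℝ) 1 := by
    simp [mem_sphere_iff_norm, hv', norm_smul, inv_mul_cancel₀ hvn]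
  have hv'R : v' ∈ R := Submodule.smul_mem _ _ hvR
  have hvv : v = ‖v‖ • v' := by
    rw [hv', smul_smul, mul_inv_cancel₀ hvn, one_smul]
  have hMv : v ⬝ᵥ M *ᵥ v = ‖v‖ ^ 2 * (v' ⬝ᵥ M *ᵥ v') := by
    conv_lhs => rw [hvv]
    exact quad_smul M _ _
  have hAv : |v ⬝ᵥ A *ᵥ v| = ‖v‖ ^ 2 * |v' ⬝ᵥ A *ᵥ v'| := by
    conv_lhs => rw [hvv]
    rw [quad_smul A _ _, abs_mul, abs_of_nonneg (by positivity)]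
  have h1 : c ≤ v' ⬝ᵥ M *ᵥ v' := hzmin ⟨hv'S, hv'R⟩
  have h2 : |v' ⬝ᵥ A *ᵥ v'| ≤ C := hwmax hv'S
  rw [hMv, hAv]
  have hn2 : (0:ℝ) ≤ ‖v‖ ^ 2 := by positivity
  calc c / (C + 1) * (‖v‖ ^ 2 * |v' ⬝ᵥ A *ᵥ v'|)
      ≤ c / (C + 1) * (‖v‖ ^ 2 * C) := by
        apply mul_le_mul_of_nonneg_left (mul_le_mul_of_nonneg_left h2 hn2)
        positivity
    _ ≤ ‖v‖ ^ 2 * c := by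
        rw [div_mul_eq_mul_div, div_le_iff₀ (by linarith)]
        nlinarith
    _ ≤ ‖v‖ ^ 2 * (v' ⬝ᵥ M *ᵥ v') := mul_le_mul_of_nonneg_left h1 hn2

open Matrix

-- helper: real symmetric with nonneg quadratic form is PSD
lemma psd_of_symm {n : ℕ} {B : Matrix (Fin n) (Fin n) ℝ} (hB : B.IsSymm)
    (h : ∀ x : Fin n → ℝ, 0 ≤ x ⬝ᵥ B *ᵥ x) : B.PosSemidef := by
  apply PosSemidef.of_dotProduct_mulVec_nonneg
  · rw [Matrix.IsHermitian, conjTranspose_eq_transpose_of_trivial]; exact hB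
  · intro x
    have : star x = x := by ext i; simp
    rw [this]; exact h x

-- M PSD nonzero gives a point with positive quadratic form
lemma exists_pos_quad {n : ℕ} {M : Matrix (Fin n) (Fin n) ℝ} (hM : M.PosSemidef)
    (hM0 : M ≠ 0) : ∃ x : Fin n → ℝ, 0 < x ⬝ᵥ M *ᵥ x := by
  by_contra h
  push_neg at h
  apply hM0
  have hz : ∀ x : Fin n → ℝ, M *ᵥ x = 0 := by
    intro x
    have h1 : star x ⬝ᵥ M *ᵥ x = 0 := by
      have hx : star x = x := by ext i; simp
      rw [hx]
      exact le_antisymm (by simpa using h x) (by simpa using hM.dotProduct_mulVec_nonneg x)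
    exact (hM.dotProduct_mulVec_zero_iff x).mp h1
  ext i j
  simpa using congrFun (hz (Pi.single j 1)) i

/-- Extreme rays of a spectrahedral cone `C = 𝒮₊ⁿ ∩ L` are characterized by kernel
maximality: a nonzero PSD matrix `M ∈ L` spans an extreme ray of `C` iff every `A ∈ L`
whose kernel contains the kernel of `M` is a scalar multiple of `M`. -/
theorem spectrahedral_extreme_ray_iff_kernel_maximal {n : ℕ}
    (L : Submodule ℝ (Matrix (Fin n) (Fin n) ℝ))
    (hLsymm : ∀ A ∈ L, A.IsSymm)
    (M : Matrix (Fin n) (Fin n) ℝ) (hML : M ∈ L) (hMpsd : M.PosSemidef) (hM0 : M ≠ 0) :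
    (∀ A B : Matrix (Fin n) (Fin n) ℝ,
        A ∈ L → A.PosSemidef → B ∈ L → B.PosSemidef → A + B = M →
        ∃ s t : ℝ, 0 ≤ s ∧ 0 ≤ t ∧ A = s • M ∧ B = t • M) ↔
    (∀ A ∈ L, LinearMap.ker M.mulVecLin ≤ LinearMap.ker A.mulVecLin →
      ∃ c : ℝ, A = c • M) := by
  have hMsymm : M.IsSymm := by
    have h := hMpsd.isHermitian
    rwa [Matrix.IsHermitian, conjTranspose_eq_transpose_of_trivial] at h
  constructor
  · -- extreme ray → kernel maximal
    intro hext A hAL hker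
    have hAsymm : A.IsSymm := hLsymm A hAL
    obtain ⟨ε, hε, hbound⟩ := key_eps hMpsd hM0 hAsymm hker
    set P := (1/2 : ℝ) • (M + ε • A) with hPdef
    set Q := (1/2 : ℝ) • (M - ε • A) with hQdef
    have hPL : P ∈ L := Submodule.smul_mem _ _ (Submodule.add_mem _ hML (Submodule.smul_mem _ _ hAL))
    have hQL : Q ∈ L := Submodule.smul_mem _ _ (Submodule.sub_mem _ hML (Submodule.smul_mem _ _ hAL))
    have hquadP : ∀ x : Fin n → ℝ, x ⬝ᵥ P *ᵥ x = (1/2) * (x ⬝ᵥ M *ᵥ x + ε * (x ⬝ᵥ A *ᵥ x)) := by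
      intro x
      rw [hPdef, smul_mulVec, dotProduct_smul, add_mulVec, dotProduct_add,
        smul_mulVec, dotProduct_smul]
      simp [smul_eq_mul]
    have hquadQ : ∀ x : Fin n → ℝ, x ⬝ᵥ Q *ᵥ x = (1/2) * (x ⬝ᵥ M *ᵥ x - ε * (x ⬝ᵥ A *ᵥ x)) := by
      intro x
      rw [hQdef, smul_mulVec, dotProduct_smul, sub_mulVec, dotProduct_sub,
        smul_mulVec, dotProduct_smul]
      simp [smul_eq_mul]
    have hPpsd : P.PosSemidef := by
      apply psd_of_symm
      · rw [Matrix.IsSymm] at *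
        rw [hPdef, transpose_smul, transpose_add, transpose_smul, hMsymm, hAsymm]
      · intro x
        rw [hquadP x]
        have := hbound x
        have habs := neg_abs_le (x ⬝ᵥ A *ᵥ x)
        nlinarith [abs_nonneg (x ⬝ᵥ A *ᵥ x)]
    have hQpsd : Q.PosSemidef := by
      apply psd_of_symm
      · rw [Matrix.IsSymm] at *
        rw [hQdef, transpose_smul, transpose_sub, transpose_smul, hMsymm, hAsymm]
      · intro x
        rw [hquadQ x]
        have := hbound x
        have habs := le_abs_self (x ⬝ᵥ A *ᵥ x)
        nlinarith [abs_nonneg (x ⬝ᵥ A *ᵥ x)]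
    have hPQ : P + Q = M := by
      rw [hPdef, hQdef, ← smul_add]
      have : M + ε • A + (M - ε • A) = (2:ℝ) • M := by
        rw [two_smul]; abel
      rw [this, smul_smul]
      norm_num
    obtain ⟨s, t, hs, ht, hP, hQ⟩ := hext P Q hPL hPpsd hQL hQpsd hPQ
    refine ⟨(2*s - 1)/ε, ?_⟩
    have h3 : M + ε • A = (2*s) • M := by
      calc M + ε • A = (2:ℝ) • ((1/2:ℝ) • (M + ε • A)) := by rw [smul_smul]; norm_num
        _ = (2:ℝ) • (s • M) := by rw [← hPdef, hP]
        _ = (2*s) • M := by rw [smul_smul]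
    have h4 : ε • A = (2*s - 1) • M := by
      rw [sub_smul, one_smul, ← h3]
      abel
    calc A = ε⁻¹ • (ε • A) := by rw [smul_smul, inv_mul_cancel₀ hε.ne', one_smul]
      _ = ε⁻¹ • ((2*s - 1) • M) := by rw [h4]
      _ = ((2*s - 1)/ε) • M := by rw [smul_smul]; ring_nf
  · -- kernel maximal → extreme ray
    intro hmax A B hAL hApsd hBL hBpsd hAB
    have hker : LinearMap.ker M.mulVecLin ≤ LinearMap.ker A.mulVecLin := by
      intro x hx
      rw [LinearMap.mem_ker, mulVecLin_apply] at hx ⊢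
      have hstar : star x = x := by ext i; simp
      have hMq : x ⬝ᵥ M *ᵥ x = 0 := by rw [hx, dotProduct_zero]
      have hsum : x ⬝ᵥ A *ᵥ x + x ⬝ᵥ B *ᵥ x = 0 := by
        rw [← dotProduct_add, ← add_mulVec, hAB, hMq]
      have hA0 : 0 ≤ x ⬝ᵥ A *ᵥ x := by have := hApsd.dotProduct_mulVec_nonneg x; rwa [hstar] at this
      have hB0 : 0 ≤ x ⬝ᵥ B *ᵥ x := by have := hBpsd.dotProduct_mulVec_nonneg x; rwa [hstar] at this
      have : x ⬝ᵥ A *ᵥ x = 0 := by linarith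
      have := (hApsd.dotProduct_mulVec_zero_iff x).mp (by rw [hstar]; exact this)
      exact this
    obtain ⟨s, hs⟩ := hmax A hAL hker
    have hB : B = (1 - s) • M := by
      rw [sub_smul, one_smul, ← hs, ← hAB]
      abel
    obtain ⟨x₀, hx₀⟩ := exists_pos_quad hMpsd hM0
    have hx₀star : star x₀ = x₀ := by ext i; simp
    have hAq : x₀ ⬝ᵥ A *ᵥ x₀ = s * (x₀ ⬝ᵥ M *ᵥ x₀) := by
      rw [hs, smul_mulVec, dotProduct_smul, smul_eq_mul]
    have hBq : x₀ ⬝ᵥ B *ᵥ x₀ = (1 - s) * (x₀ ⬝ᵥ M *ᵥ x₀) := by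
      rw [hB, smul_mulVec, dotProduct_smul, smul_eq_mul]
    have hApos : 0 ≤ x₀ ⬝ᵥ A *ᵥ x₀ := by have := hApsd.dotProduct_mulVec_nonneg x₀; rwa [hx₀star] at this
    have hBpos : 0 ≤ x₀ ⬝ᵥ B *ᵥ x₀ := by have := hBpsd.dotProduct_mulVec_nonneg x₀; rwa [hx₀star] at this
    refine ⟨s, 1 - s, ?_, ?_, hs, hB⟩
    · nlinarith
    · nlinarith
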